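/- Let n be a positive integer and let σ_1, …, σ_n ≥ 0 and σ'_1, …, σ'_n ≥ 0 satisfy σ_i ≤ σ'_i ≤ 2·σ_i for every i. Let X_1, …, X_n be independent random variables with X_i Gaussian with mean 0 and variance σ_i², and let X'_1, …, X'_n be independent random variables with X'_i Gaussian with mean 0 and variance σ'_i². Then E[max_{i∈[n]} X_i] ≤ E[max_{i∈[n]} X'_i] ≤ 2·E[max_{i∈[n]} X_i]. -/

import Mathlib

open MeasureTheory ProbabilityTheory Finset
open scoped NNReal ENNReal

noncomputable def gam : Measure ℝ := gaussianReal 0 1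
instance : IsProbabilityMeasure gam := by unfold gam; infer_instance

noncomputable def pim (n : ℕ) : Measure (Fin n → ℝ) := Measure.pi fun _ => gam
instance (n : ℕ) : IsProbabilityMeasure (pim n) := by unfold pim; infer_instance

variable {n : ℕ} [NeZero n]
set_option linter.unusedSectionVars false

lemma map_eval_pim (i : Fin n) : Measure.map (fun z : Fin n → ℝ => z i) (pim n) = gam := by
  ext s hs
  rw [Measure.map_apply (measurable_pi_apply i) hs]
  have hp : (fun z : Fin n → ℝ => z i) ⁻¹' s
      = Set.pi Set.univ (Function.update (fun _ => Set.univ) i s) := by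
    ext z
    simp only [Set.mem_preimage, Set.mem_univ_pi, Function.update_apply]
    constructor
    · intro h j; by_cases hj : j = i
      · subst hj; simp [h]
      · simp [hj]
    · intro h; have := h i; simpa using this
  rw [hp, pim, Measure.pi_pi]
  rw [Fintype.prod_eq_single i (fun j hj => by simp [Function.update_apply, hj])]
  simp

lemma integrable_eval (i : Fin n) : Integrable (fun z : Fin n → ℝ => z i) (pim n) := by
  have h : Integrable (fun x : ℝ => x) (Measure.map (fun z : Fin n → ℝ => z i) (pim n)) := by
    rw [map_eval_pim i]
    exact (by
      rw [gam, gaussianReal_of_var_ne_zero 0 one_ne_zero,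
        integrable_withDensity_iff (measurable_gaussianPDF 0 1)
          (Filter.Eventually.of_forall fun x => ENNReal.ofReal_lt_top)]
      have h1 : Integrable (fun x : ℝ =>
          (Real.sqrt (2 * Real.pi * ((1:ℝ≥0):ℝ)))⁻¹ * (x * Real.exp (-(2⁻¹) * x ^ 2))) volume :=
        (integrable_mul_exp_neg_mul_sq (b := 2⁻¹) (by norm_num)).const_mul _
      refine h1.congr (Filter.Eventually.of_forall fun x => ?_)
      simp only [gaussianPDF_def]
      rw [ENNReal.toReal_ofReal (gaussianPDFReal_nonneg 0 1 x)]
      simp only [gaussianPDFReal_def]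
      push_cast
      ring_nf)
  exact h.comp_measurable (measurable_pi_apply i)

noncomputable def Fm (σ : Fin n → ℝ) (z : Fin n → ℝ) : ℝ :=
  univ.sup' univ_nonempty (fun i => σ i * z i)

lemma measurable_Fm (σ : Fin n → ℝ) : Measurable (Fm σ) := by
  have he : Fm σ = univ.sup' univ_nonempty (fun i (z : Fin n → ℝ) => σ i * z i) := by
    funext z
    rw [Finset.sup'_apply]
    rfl
  rw [he]
  exact Finset.measurable_sup' _ fun i _ => by exact (measurable_pi_apply i : Measurable fun z : Fin n → ℝ => z i).const_mul (σ i)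

lemma abs_Fm_le (σ z : Fin n → ℝ) : |Fm σ z| ≤ ∑ i, |σ i| * |z i| := by
  unfold Fm
  rw [abs_le]
  constructor
  · obtain ⟨i0⟩ := (inferInstance : Nonempty (Fin n))
    have h1 : -(∑ i, |σ i| * |z i|) ≤ σ i0 * z i0 := by
      have h2 : |σ i0 * z i0| ≤ ∑ i, |σ i| * |z i| := by
        rw [abs_mul]
        exact Finset.single_le_sum (f := fun i => |σ i| * |z i|)
          (fun i _ => mul_nonneg (abs_nonneg _) (abs_nonneg _)) (mem_univ i0)
      have := neg_abs_le (σ i0 * z i0)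
      linarith
    exact h1.trans (Finset.le_sup' (fun i => σ i * z i) (mem_univ i0))
  · refine Finset.sup'_le _ _ fun i _ => ?_
    have h2 : |σ i * z i| ≤ ∑ i, |σ i| * |z i| := by
      rw [abs_mul]
      exact Finset.single_le_sum (f := fun i => |σ i| * |z i|)
        (fun i _ => mul_nonneg (abs_nonneg _) (abs_nonneg _)) (mem_univ i)
    exact (le_abs_self _).trans h2

lemma integrable_Fm (σ : Fin n → ℝ) : Integrable (Fm σ) (pim n) := by
  refine Integrable.mono' (g := fun z => ∑ i, |σ i| * |z i|)
    (integrable_finset_sum _ fun i _ => ((integrable_eval i).abs.const_mul _))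
    (measurable_Fm σ).aestronglyMeasurable
    (Filter.Eventually.of_forall fun z => ?_)
  rw [Real.norm_eq_abs]
  exact abs_Fm_le σ z

lemma measurePreserving_neg_gam : MeasurePreserving (fun x : ℝ => -x) gam gam := by
  refine ⟨measurable_neg, ?_⟩
  have h := gaussianReal_map_const_mul (μ := 0) (v := 1) (-1)
  have he : ((-1 : ℝ) * ·) = (fun x : ℝ => -x) := by funext x; ring
  rw [he] at h
  rw [gam, h]
  congr 1
  · norm_num
  · ext
    norm_num

noncomputable def flipc (j : Fin n) (z : Fin n → ℝ) : Fin n → ℝ := Function.update z j (-(z j))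

lemma measurePreserving_flipc (j : Fin n) : MeasurePreserving (flipc j) (pim n) (pim n) := by
  classical
  have h := measurePreserving_pi (fun _ : Fin n => gam) (fun _ => gam)
    (f := fun i => if i = j then (fun x : ℝ => -x) else id)
    (fun i => by by_cases hi : i = j <;> simp [hi, measurePreserving_neg_gam, MeasurePreserving.id])
  have he : (fun (a : Fin n → ℝ) i => (if i = j then (fun x : ℝ => -x) else id) (a i)) = flipc j := by
    funext z i
    by_cases hi : i = j
    · subst hi; simp [flipc]
    · simp [flipc, hi, Function.update_apply]
  rw [he] at h
  exact h

lemma key_max (A w w' : ℝ) (hw : 0 ≤ w) (hww' : w ≤ w') :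
    max w A + max (-w) A ≤ max w' A + max (-w') A := by
  rcases max_cases w A with ⟨h1,h2⟩|⟨h1,h2⟩ <;>
  rcases max_cases (-w) A with ⟨h3,h4⟩|⟨h3,h4⟩ <;>
  rcases max_cases w' A with ⟨h5,h6⟩|⟨h5,h6⟩ <;>
  rcases max_cases (-w') A with ⟨h7,h8⟩|⟨h7,h8⟩ <;>
  linarith

lemma key_max' (A u v x : ℝ) (hu : 0 ≤ u) (huv : u ≤ v) :
    max (u*x) A + max (-(u*x)) A ≤ max (v*x) A + max (-(v*x)) A := by
  rcases le_total 0 x with hx|hx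
  · exact key_max A _ _ (mul_nonneg hu hx) (mul_le_mul_of_nonneg_right huv hx)
  · have h := key_max A (-(u*x)) (-(v*x)) (by nlinarith) (by nlinarith)
    rw [neg_neg, neg_neg] at h
    linarith

lemma sup'_univ_eq_max (f : Fin n → ℝ) (j : Fin n) (h : (univ.erase j).Nonempty) :
    univ.sup' univ_nonempty f = max (f j) ((univ.erase j).sup' h f) := by
  apply le_antisymm
  · refine Finset.sup'_le _ _ fun i _ => ?_
    by_cases hi : i = j
    · subst hi; exact le_max_left _ _
    · exact le_max_of_le_right (Finset.le_sup' f (Finset.mem_erase.2 ⟨hi, Finset.mem_univ i⟩))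
  · exact max_le (Finset.le_sup' f (Finset.mem_univ j))
      (Finset.sup'_le _ _ fun i _ => Finset.le_sup' f (Finset.mem_univ i))

lemma pointwise_step (c : Fin n → ℝ) (j : Fin n) (u v : ℝ) (hu : 0 ≤ u) (huv : u ≤ v)
    (z : Fin n → ℝ) :
    Fm (Function.update c j u) z + Fm (Function.update c j u) (flipc j z)
      ≤ Fm (Function.update c j v) z + Fm (Function.update c j v) (flipc j z) := by
  classical
  by_cases h : (univ.erase j).Nonempty
  · have hFz : ∀ w, Fm (Function.update c j w) z
        = max (w * z j) ((univ.erase j).sup' h (fun i => c i * z i)) := by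
      intro w
      unfold Fm
      rw [sup'_univ_eq_max _ j h]
      congr 1
      · simp
      · exact Finset.sup'_congr h rfl fun i hi => by
          rw [Function.update_apply, if_neg (Finset.mem_erase.1 hi).1]
    have hFfz : ∀ w, Fm (Function.update c j w) (flipc j z)
        = max (-(w * z j)) ((univ.erase j).sup' h (fun i => c i * z i)) := by
      intro w
      unfold Fm
      rw [sup'_univ_eq_max _ j h]
      congr 1
      · simp [flipc, mul_comm]
      · refine Finset.sup'_congr h rfl fun i hi => ?_
        have hij := (Finset.mem_erase.1 hi).1
        rw [Function.update_apply, if_neg hij, flipc, Function.update_apply, if_neg hij]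
    rw [hFz u, hFz v, hFfz u, hFfz v]
    exact key_max' _ u v (z j) hu huv
  · have huniv : (univ : Finset (Fin n)) = {j} := by
      have := (Finset.erase_eq_empty_iff _ _).1 (Finset.not_nonempty_iff_eq_empty.1 h)
      rcases this with h1 | h1
      · exact absurd h1 (Finset.univ_nonempty).ne_empty
      · exact h1
    have hF : ∀ (w : ℝ) (y : Fin n → ℝ), Fm (Function.update c j w) y = w * y j := by
      intro w y
      unfold Fm
      have : univ.sup' univ_nonempty (fun i => Function.update c j w i * y i)
          = ({j} : Finset (Fin n)).sup' (huniv ▸ univ_nonempty) (fun i => Function.update c j w i * y i) :=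
        Finset.sup'_congr _ huniv fun i _ => rfl
      rw [this, Finset.sup'_singleton]
      simp
    rw [hF u, hF v, hF u, hF v]
    have : flipc j z j = -(z j) := by simp [flipc]
    rw [this]
    ring_nf
    exact le_refl _

lemma integral_step (c : Fin n → ℝ) (j : Fin n) (u v : ℝ) (hu : 0 ≤ u) (huv : u ≤ v) :
    ∫ z, Fm (Function.update c j u) z ∂(pim n) ≤ ∫ z, Fm (Function.update c j v) z ∂(pim n) := by
  have hflip := measurePreserving_flipc (n := n) j
  have hcomp : ∀ σ : Fin n → ℝ, ∫ z, Fm σ (flipc j z) ∂(pim n) = ∫ z, Fm σ z ∂(pim n) := by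
    intro σ
    conv_rhs => rw [← hflip.map_eq]
    exact (integral_map hflip.aemeasurable (measurable_Fm σ).aestronglyMeasurable).symm
  have hint : ∀ σ : Fin n → ℝ, Integrable (fun z => Fm σ (flipc j z)) (pim n) :=
    fun σ => (hflip.integrable_comp (measurable_Fm σ).aestronglyMeasurable).2 (integrable_Fm σ)
  have h2 : ∫ z, (Fm (Function.update c j u) z + Fm (Function.update c j u) (flipc j z)) ∂(pim n)
      ≤ ∫ z, (Fm (Function.update c j v) z + Fm (Function.update c j v) (flipc j z)) ∂(pim n) :=
    integral_mono ((integrable_Fm _).add (hint _)) ((integrable_Fm _).add (hint _))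
      (fun z => pointwise_step c j u v hu huv z)
  rw [integral_add (integrable_Fm _) (hint _), integral_add (integrable_Fm _) (hint _),
    hcomp, hcomp] at h2
  linarith

lemma J_mono (a b : Fin n → ℝ) (ha : ∀ i, 0 ≤ a i) (hab : ∀ i, a i ≤ b i) :
    ∫ z, Fm a z ∂(pim n) ≤ ∫ z, Fm b z ∂(pim n) := by
  classical
  have main : ∀ s : Finset (Fin n),
      ∫ z, Fm a z ∂(pim n) ≤ ∫ z, Fm (fun i => if i ∈ s then b i else a i) z ∂(pim n) := by
    intro s
    induction s using Finset.induction with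
    | empty => simp
    | @insert j s hj ih =>
      refine le_trans ih ?_
      have h1 : (fun i => if i ∈ insert j s then b i else a i)
          = Function.update (fun i => if i ∈ s then b i else a i) j (b j) := by
        funext i
        by_cases hi : i = j
        · subst hi; simp
        · simp [Function.update_apply, hi, Finset.mem_insert]
      have h2 : (fun i => if i ∈ s then b i else a i)
          = Function.update (fun i => if i ∈ s then b i else a i) j (a j) := by
        funext i
        by_cases hi : i = j
        · subst hi; simp [hj]
        · simp [Function.update_apply, hi]
      calc ∫ z, Fm (fun i => if i ∈ s then b i else a i) z ∂(pim n)
          = ∫ z, Fm (Function.update (fun i => if i ∈ s then b i else a i) j (a j)) z ∂(pim n) := by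
            rw [← h2]
        _ ≤ ∫ z, Fm (Function.update (fun i => if i ∈ s then b i else a i) j (b j)) z ∂(pim n) :=
            integral_step _ j (a j) (b j) (ha j) (hab j)
        _ = ∫ z, Fm (fun i => if i ∈ insert j s then b i else a i) z ∂(pim n) := by rw [← h1]
  have := main univ
  simpa using this

lemma Fm_two_smul (a : Fin n → ℝ) (z : Fin n → ℝ) : Fm (fun i => 2 * a i) z = 2 * Fm a z := by
  unfold Fm
  have h := Finset.comp_sup'_eq_sup'_comp (s := (univ : Finset (Fin n))) univ_nonempty
    (f := fun i => a i * z i) (fun x : ℝ => 2 * x)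
    (fun x y => mul_max_of_nonneg _ _ (by norm_num : (0:ℝ) ≤ 2))
  have h2 : (2 : ℝ) * univ.sup' univ_nonempty (fun i => a i * z i)
      = univ.sup' univ_nonempty ((fun x : ℝ => 2 * x) ∘ fun i => a i * z i) := h
  rw [h2]
  exact Finset.sup'_congr _ rfl fun i _ => by simp [Function.comp, mul_assoc]

lemma map_joint_eq_pi {Ω : Type} [MeasurableSpace Ω] (P : Measure Ω) [IsProbabilityMeasure P]
    (X : Fin n → Ω → ℝ) (hmX : ∀ i, Measurable (X i))
    (hind : iIndepFun X P) :
    Measure.map (fun ω i => X i ω) P = Measure.pi (fun i => Measure.map (X i) P) := by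
  haveI : ∀ i, IsProbabilityMeasure (Measure.map (X i) P) :=
    fun i => Measure.isProbabilityMeasure_map (hmX i).aemeasurable
  refine (Measure.pi_eq fun s hs => ?_).symm
  rw [Measure.map_apply (measurable_pi_lambda _ hmX) (MeasurableSet.univ_pi hs)]
  have hp : (fun ω i => X i ω) ⁻¹' Set.pi Set.univ s = ⋂ i ∈ Finset.univ, X i ⁻¹' s i := by
    ext ω
    simp [Set.mem_univ_pi]
  rw [hp, hind.measure_inter_preimage_eq_mul univ (fun i _ => hs i)]
  exact Finset.prod_congr rfl fun i _ => (Measure.map_apply (hmX i) (hs i)).symm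

lemma measurable_isup : Measurable (fun y : Fin n → ℝ => ⨆ i, y i) := by
  have he : (fun y : Fin n → ℝ => ⨆ i, y i)
      = fun y => univ.sup' univ_nonempty (fun i => y i) := by
    funext y
    rw [Finset.sup'_univ_eq_ciSup]
  rw [he]
  have he2 : (fun y : Fin n → ℝ => univ.sup' univ_nonempty (fun i => y i))
      = univ.sup' univ_nonempty (fun i (y : Fin n → ℝ) => y i) := by
    funext y
    rw [Finset.sup'_apply]
  rw [he2]
  exact Finset.measurable_sup' _ fun i _ => measurable_pi_apply i

lemma integral_max_eq {Ω : Type} [MeasurableSpace Ω] (P : Measure Ω) [IsProbabilityMeasure P]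
    (σ : Fin n → ℝ) (hσ : ∀ i, 0 ≤ σ i)
    (X : Fin n → Ω → ℝ) (hmX : ∀ i, Measurable (X i))
    (hind : iIndepFun X P)
    (hX : ∀ i, Measure.map (X i) P = gaussianReal 0 (Real.toNNReal (σ i ^ 2))) :
    (∫ ω, ⨆ i, X i ω ∂P) = ∫ z, Fm σ z ∂(pim n) := by
  have hgauss : ∀ i, Measure.map (X i) P = Measure.map (fun x => σ i * x) gam := by
    intro i
    rw [hX i, gam, gaussianReal_map_const_mul]
    congr 1
    · simp
    · ext
      simp [Real.coe_toNNReal _ (sq_nonneg (σ i))]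
  haveI : ∀ i, IsProbabilityMeasure (Measure.map (fun x => σ i * x) gam) :=
    fun i => Measure.isProbabilityMeasure_map ((measurable_id.const_mul (σ i)).aemeasurable)
  have hscale : Measure.map (fun (z : Fin n → ℝ) i => σ i * z i) (pim n)
      = Measure.pi fun i => Measure.map (fun x => σ i * x) gam := by
    refine (measurePreserving_pi (fun _ : Fin n => gam) (fun i => Measure.map (fun x => σ i * x) gam)
      (f := fun i x => σ i * x) (fun i => ⟨measurable_id.const_mul (σ i), rfl⟩)).map_eq
  have h1 : (∫ ω, ⨆ i, X i ω ∂P)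
      = ∫ y, (fun y : Fin n → ℝ => ⨆ i, y i) y ∂(Measure.map (fun ω i => X i ω) P) :=
    (integral_map (measurable_pi_lambda _ hmX).aemeasurable
      measurable_isup.aestronglyMeasurable).symm
  rw [h1, map_joint_eq_pi P X hmX hind]
  have h2 : (Measure.pi fun i => Measure.map (X i) P)
      = Measure.map (fun (z : Fin n → ℝ) i => σ i * z i) (pim n) := by
    rw [hscale]
    congr 1
    funext i
    exact hgauss i
  rw [h2, integral_map (by
      exact (measurable_pi_lambda _ fun i => (measurable_pi_apply i).const_mul (σ i)).aemeasurable)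
    measurable_isup.aestronglyMeasurable]
  congr 1
  funext z
  rw [← Finset.sup'_univ_eq_ciSup]
  rfl

theorem expected_max_two_approx
    (n : ℕ) (hn : 0 < n)
    (Ω : Type) [MeasurableSpace Ω] (P : Measure Ω) [IsProbabilityMeasure P]
    (Ω' : Type) [MeasurableSpace Ω'] (P' : Measure Ω') [IsProbabilityMeasure P']
    (σ σ' : Fin n → ℝ) (hσ : ∀ i, 0 ≤ σ i)
    (hle : ∀ i, σ i ≤ σ' i) (hle2 : ∀ i, σ' i ≤ 2 * σ i)
    (X : Fin n → Ω → ℝ) (hmX : ∀ i, Measurable (X i))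
    (hindX : iIndepFun X P)
    (hX : ∀ i, Measure.map (X i) P = gaussianReal 0 (Real.toNNReal (σ i ^ 2)))
    (X' : Fin n → Ω' → ℝ) (hmX' : ∀ i, Measurable (X' i))
    (hindX' : iIndepFun X' P')
    (hX' : ∀ i, Measure.map (X' i) P' = gaussianReal 0 (Real.toNNReal (σ' i ^ 2))) :
    (∫ ω, ⨆ i, X i ω ∂P) ≤ (∫ ω, ⨆ i, X' i ω ∂P') ∧
      (∫ ω, ⨆ i, X' i ω ∂P') ≤ 2 * ∫ ω, ⨆ i, X i ω ∂P := by
  haveI : NeZero n := ⟨hn.ne'⟩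
  have hσ' : ∀ i, 0 ≤ σ' i := fun i => (hσ i).trans (hle i)
  rw [integral_max_eq P σ hσ X hmX hindX hX, integral_max_eq P' σ' hσ' X' hmX' hindX' hX']
  constructor
  · exact J_mono σ σ' hσ hle
  · calc ∫ z, Fm σ' z ∂(pim n) ≤ ∫ z, Fm (fun i => 2 * σ i) z ∂(pim n) :=
        J_mono σ' _ hσ' hle2
      _ = 2 * ∫ z, Fm σ z ∂(pim n) := by
        simp_rw [Fm_two_smul]
        exact MeasureTheory.integral_const_mul 2 _
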